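/- Suppose a left-ordered group (G,⪯) has infinitely many ⪯-convex subgroups. Then ⪯ is not an isolated point of LO(G). -/

import Mathlib

structure LeftOrder (G : Type*) [Group G] where
  lt : G → G → Prop
  irrefl : ∀ a, ¬ lt a a
  trans : ∀ a b c, lt a b → lt b c → lt a c
  total : ∀ a b, lt a b ∨ a = b ∨ lt b a
  mul_left : ∀ a b c, lt a b → lt (c * a) (c * b)

namespace LeftOrder

variable {G : Type*} [Group G]

def le (o : LeftOrder G) (a b : G) : Prop := o.lt a b ∨ a = b

noncomputable def cone (o : LeftOrder G) : G → Bool :=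
  fun g => @decide (o.lt 1 g) (Classical.propDecidable _)

noncomputable instance : TopologicalSpace (LeftOrder G) :=
  TopologicalSpace.induced cone inferInstance

def restrict (o : LeftOrder G) (H : Subgroup G) : LeftOrder H where
  lt a b := o.lt a b
  irrefl a := o.irrefl a
  trans a b c hab hbc := o.trans _ _ _ hab hbc
  total a b := by
    rcases o.total (a : G) b with h | h | h
    · exact Or.inl h
    · exact Or.inr (Or.inl (Subtype.coe_injective h))
    · exact Or.inr (Or.inr h)
  mul_left a b c h := by
    simpa using o.mul_left (a : G) b c h

def conj (o : LeftOrder G) (g : G) : LeftOrder G where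
  lt a b := o.lt (g * a * g⁻¹) (g * b * g⁻¹)
  irrefl a := o.irrefl _
  trans a b c hab hbc := o.trans _ _ _ hab hbc
  total a b := by
    rcases o.total (g * a * g⁻¹) (g * b * g⁻¹) with h | h | h
    · exact Or.inl h
    · exact Or.inr (Or.inl (mul_left_cancel (mul_right_cancel h)))
    · exact Or.inr (Or.inr h)
  mul_left a b c h := by
    have key : ∀ x : G, g * (c * x) * g⁻¹ = (g * c * g⁻¹) * (g * x * g⁻¹) := by
      intro x; group
    show o.lt (g * (c * a) * g⁻¹) (g * (c * b) * g⁻¹)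
    rw [key a, key b]
    exact o.mul_left _ _ _ h

def IsConvex (o : LeftOrder G) (H : Subgroup G) : Prop :=
  ∀ g h₁ h₂ : G, h₁ ∈ H → h₂ ∈ H → o.le h₁ g → o.le g h₂ → g ∈ H

def IsConradian (o : LeftOrder G) : Prop :=
  ∀ f g : G, o.lt 1 f → o.lt 1 g → o.lt g (f * (g * g))

end LeftOrder

namespace LeftOrder

variable {G : Type*} [Group G]

lemma mul_left_iff (o : LeftOrder G) (a b c : G) : o.lt (c * a) (c * b) ↔ o.lt a b := by
  constructor
  · intro h
    have := o.mul_left (c * a) (c * b) c⁻¹ h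
    simpa [mul_assoc] using this
  · exact o.mul_left a b c

lemma inv_pos_iff (o : LeftOrder G) (a : G) : o.lt 1 a⁻¹ ↔ o.lt a 1 := by
  rw [← o.mul_left_iff 1 a⁻¹ a]; simp

lemma inv_neg_iff (o : LeftOrder G) (a : G) : o.lt a⁻¹ 1 ↔ o.lt 1 a := by
  have := o.inv_pos_iff a⁻¹; simpa using this.symm

lemma asymm (o : LeftOrder G) {a b : G} (h : o.lt a b) : ¬ o.lt b a :=
  fun h' => o.irrefl a (o.trans _ _ _ h h')

/-- positivity predicate of the flipped order -/
def FPos (o : LeftOrder G) (C : Subgroup G) (x : G) : Prop :=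
  (x ∈ C ∧ o.lt x 1) ∨ (x ∉ C ∧ o.lt 1 x)

lemma fpos_mul (o : LeftOrder G) {C : Subgroup G} (hC : o.IsConvex C) {x y : G}
    (hx : o.FPos C x) (hy : o.FPos C y) : o.FPos C (x * y) := by
  rcases hx with ⟨hxC, hx⟩ | ⟨hxC, hx⟩ <;> rcases hy with ⟨hyC, hy⟩ | ⟨hyC, hy⟩
  · exact Or.inl ⟨mul_mem hxC hyC,
      o.trans _ _ _ (by simpa using o.mul_left y 1 x hy) hx⟩
  · -- x ∈ C neg, y ∉ C pos
    have hxyC : x * y ∉ C := fun hm => hyC (by simpa [mul_assoc] using mul_mem (inv_mem hxC) hm)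
    refine Or.inr ⟨hxyC, ?_⟩
    rcases o.total 1 (x * y) with h | h | h
    · exact h
    · exact absurd (show y ∈ C by
        rw [eq_inv_of_mul_eq_one_right h.symm]; exact inv_mem hxC) hyC
    · have h1 : o.lt y x⁻¹ := by
        have := o.mul_left (x * y) 1 x⁻¹ h
        simpa [mul_assoc] using this
      exact absurd (hC y 1 x⁻¹ (one_mem C) (inv_mem hxC) (Or.inl hy) (Or.inl h1)) hyC
  · -- x ∉ C pos, y ∈ C neg
    have hxyC : x * y ∉ C := fun hm => hxC (by simpa [mul_assoc] using mul_mem hm (inv_mem hyC))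
    refine Or.inr ⟨hxyC, ?_⟩
    rcases o.total 1 (x * y) with h | h | h
    · exact h
    · exact absurd (show x ∈ C by
        rw [eq_inv_of_mul_eq_one_left h.symm]; exact inv_mem hyC) hxC
    · have h1 : o.lt y x⁻¹ := by
        have := o.mul_left (x * y) 1 x⁻¹ h
        simpa [mul_assoc] using this
      have h2 : o.lt x⁻¹ 1 := (o.inv_neg_iff x).mpr hx
      have : x⁻¹ ∈ C := hC x⁻¹ y 1 hyC (one_mem C) (Or.inl h1) (Or.inl h2)
      exact absurd (by simpa using inv_mem this) hxC
  · -- both ∉ C pos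
    have hlt : o.lt x (x * y) := by simpa using o.mul_left 1 y x hy
    have hpos : o.lt 1 (x * y) := o.trans _ _ _ hx hlt
    exact Or.inr ⟨fun hm => hxC (hC x 1 (x * y) (one_mem C) hm (Or.inl hx) (Or.inl hlt)),
      hpos⟩

/-- Flip the order inside a convex subgroup. -/
def flip (o : LeftOrder G) (C : Subgroup G) (hC : o.IsConvex C) : LeftOrder G where
  lt a b := o.FPos C (a⁻¹ * b)
  irrefl a := by simp [FPos, o.irrefl]
  trans a b c hab hbc := by
    have := o.fpos_mul hC hab hbc
    have e : (a⁻¹ * b) * (b⁻¹ * c) = a⁻¹ * c := by group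
    rwa [e] at this
  total a b := by
    have einv : b⁻¹ * a = (a⁻¹ * b)⁻¹ := by group
    rcases o.total (a⁻¹ * b) 1 with h | h | h
    · by_cases hm : a⁻¹ * b ∈ C
      · exact Or.inl (Or.inl ⟨hm, h⟩)
      · refine Or.inr (Or.inr (Or.inr ⟨?_, ?_⟩))
        · rw [einv]; exact fun hm' => hm (by simpa using inv_mem hm')
        · rw [einv, o.inv_pos_iff]; exact h
    · exact Or.inr (Or.inl (by
        have : b = a * (a⁻¹ * b) := by group
        rw [this, h, mul_one]))
    · by_cases hm : a⁻¹ * b ∈ C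
      · refine Or.inr (Or.inr (Or.inl ⟨?_, ?_⟩))
        · rw [einv]; exact inv_mem hm
        · rw [einv, o.inv_neg_iff]; exact h
      · exact Or.inl (Or.inr ⟨hm, h⟩)
  mul_left a b c h := by
    have e : (c * a)⁻¹ * (c * b) = a⁻¹ * b := by group
    show o.FPos C ((c * a)⁻¹ * (c * b))
    rwa [e]

lemma flip_lt_one_pos (o : LeftOrder G) (C : Subgroup G) (hC : o.IsConvex C) (g : G) :
    (o.flip C hC).lt 1 g ↔ o.FPos C g := by
  show o.FPos C (1⁻¹ * g) ↔ _
  rw [inv_one, one_mul]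

end LeftOrder

namespace LeftOrder

variable {G : Type*} [Group G]

lemma lt_iff_pos (o : LeftOrder G) (a b : G) : o.lt a b ↔ o.lt 1 (a⁻¹ * b) := by
  rw [← o.mul_left_iff 1 (a⁻¹ * b) a]; simp [mul_assoc]

lemma lt_iff_neg (o : LeftOrder G) (a b : G) : o.lt b a ↔ o.lt (a⁻¹ * b) 1 := by
  rw [← o.mul_left_iff (a⁻¹ * b) 1 a]; simp [mul_assoc]

lemma flip_pos_of_mem (o : LeftOrder G) {C : Subgroup G} (hC : o.IsConvex C) {g : G}
    (hg : g ∈ C) : (o.flip C hC).lt 1 g ↔ o.lt g 1 := by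
  rw [flip_lt_one_pos]
  constructor
  · rintro (⟨_, h⟩ | ⟨hn, _⟩)
    · exact h
    · exact absurd hg hn
  · exact fun h => Or.inl ⟨hg, h⟩

lemma flip_pos_of_not_mem (o : LeftOrder G) {C : Subgroup G} (hC : o.IsConvex C) {g : G}
    (hg : g ∉ C) : (o.flip C hC).lt 1 g ↔ o.lt 1 g := by
  rw [flip_lt_one_pos]
  constructor
  · rintro (⟨hm, _⟩ | ⟨_, h⟩)
    · exact absurd hm hg
    · exact h
  · exact fun h => Or.inr ⟨hg, h⟩

lemma flip_neg_of_mem (o : LeftOrder G) {C : Subgroup G} (hC : o.IsConvex C) {g : G}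
    (hg : g ∈ C) : (o.flip C hC).lt g 1 ↔ o.lt 1 g := by
  show o.FPos C (g⁻¹ * 1) ↔ _
  rw [mul_one]
  constructor
  · rintro (⟨_, h⟩ | ⟨hn, _⟩)
    · rwa [o.inv_neg_iff] at h
    · exact absurd (inv_mem hg) hn
  · exact fun h => Or.inl ⟨inv_mem hg, (o.inv_neg_iff g).mpr h⟩

/-- A convex subgroup contained in `C` stays convex after flipping inside `C`. -/
lemma flip_isConvex (o : LeftOrder G) {C H : Subgroup G} (hC : o.IsConvex C)
    (hH : o.IsConvex H) (hle : H ≤ C) : (o.flip C hC).IsConvex H := by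
  intro g h₁ h₂ hh₁ hh₂ hle₁ hle₂
  rcases hle₂ with hlt₂ | rfl
  swap; · exact hh₂
  rcases hle₁ with hlt₁ | rfl
  swap; · exact hh₁
  by_cases hgC : g ∈ C
  · -- inside C the flipped order is reversed
    have e₁ : o.lt g h₁ := by
      rcases hlt₁ with ⟨_, h⟩ | ⟨hn, _⟩
      · rwa [← o.lt_iff_neg h₁ g] at h
      · exact absurd (mul_mem (inv_mem (hle hh₁)) hgC) hn
    have e₂ : o.lt h₂ g := by
      rcases hlt₂ with ⟨_, h⟩ | ⟨hn, _⟩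
      · rwa [← o.lt_iff_neg g h₂] at h
      · exact absurd (mul_mem (inv_mem hgC) (hle hh₂)) hn
    exact hH g h₂ h₁ hh₂ hh₁ (Or.inl e₂) (Or.inl e₁)
  · have e₁ : o.lt h₁ g := by
      rcases hlt₁ with ⟨hm, _⟩ | ⟨_, h⟩
      · refine absurd ?_ hgC
        have : g = h₁ * (h₁⁻¹ * g) := by group
        rw [this]; exact mul_mem (hle hh₁) hm
      · rwa [← o.lt_iff_pos h₁ g] at h
    have e₂ : o.lt g h₂ := by
      rcases hlt₂ with ⟨hm, _⟩ | ⟨_, h⟩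
      · refine absurd ?_ hgC
        have : g = h₂ * (g⁻¹ * h₂)⁻¹ := by group
        rw [this]; exact mul_mem (hle hh₂) (inv_mem hm)
      · rwa [← o.lt_iff_pos g h₂] at h
    exact hH g h₁ h₂ hh₁ hh₂ (Or.inl e₁) (Or.inl e₂)

/-- Convex subgroups form a chain. -/
lemma isConvex_chain (o : LeftOrder G) {H K : Subgroup G} (hH : o.IsConvex H)
    (hK : o.IsConvex K) : H ≤ K ∨ K ≤ H := by
  by_contra hc
  push_neg at hc
  obtain ⟨⟨a, haH, haK⟩, ⟨b, hbK, hbH⟩⟩ :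
      (∃ a, a ∈ H ∧ a ∉ K) ∧ (∃ b, b ∈ K ∧ b ∉ H) := by
    constructor
    · rcases SetLike.not_le_iff_exists.mp hc.1 with ⟨a, ha, ha'⟩; exact ⟨a, ha, ha'⟩
    · rcases SetLike.not_le_iff_exists.mp hc.2 with ⟨b, hb, hb'⟩; exact ⟨b, hb, hb'⟩
  -- replace by positive representatives
  obtain ⟨a', ha'H, ha'K, ha'pos⟩ : ∃ a', a' ∈ H ∧ a' ∉ K ∧ o.lt 1 a' := by
    rcases o.total 1 a with h | h | h
    · exact ⟨a, haH, haK, h⟩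
    · exact absurd (h ▸ one_mem K) haK
    · exact ⟨a⁻¹, inv_mem haH, fun hm => haK (by simpa using inv_mem hm),
        (o.inv_pos_iff a).mpr h⟩
  obtain ⟨b', hb'K, hb'H, hb'pos⟩ : ∃ b', b' ∈ K ∧ b' ∉ H ∧ o.lt 1 b' := by
    rcases o.total 1 b with h | h | h
    · exact ⟨b, hbK, hbH, h⟩
    · exact absurd (h ▸ one_mem H) hbH
    · exact ⟨b⁻¹, inv_mem hbK, fun hm => hbH (by simpa using inv_mem hm),
        (o.inv_pos_iff b).mpr h⟩
  rcases o.total a' b' with h | h | h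
  · exact ha'K (hK a' 1 b' (one_mem K) hb'K (Or.inl ha'pos) (Or.inl h))
  · exact ha'K (h ▸ hb'K)
  · exact hb'H (hH b' 1 a' (one_mem H) ha'H (Or.inl hb'pos) (Or.inl h))

/-- If `{o}` is open then the order is determined by its cone on a finite set. -/
lemma exists_finset_of_isOpen (o : LeftOrder G) (h : IsOpen ({o} : Set (LeftOrder G))) :
    ∃ S : Finset G, ∀ o' : LeftOrder G, (∀ s ∈ S, o'.cone s = o.cone s) → o' = o := by
  obtain ⟨U, hU, hpre⟩ := isOpen_induced_iff.mp h
  have hmem : cone o ∈ U := by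
    have : o ∈ (cone ⁻¹' U : Set (LeftOrder G)) := by rw [hpre]; rfl
    exact this
  obtain ⟨I, u, hu, hsub⟩ := isOpen_pi_iff.mp hU (cone o) hmem
  refine ⟨I, fun o' ho' => ?_⟩
  have h1 : cone o' ∈ U := by
    apply hsub
    intro i hi
    change i ∈ I at hi
    have hi' : i ∈ I := hi
    have := (hu i hi').2
    rw [← ho' i hi'] at this
    exact this
  have : o' ∈ ({o} : Set (LeftOrder G)) := by rw [← hpre]; exact h1
  simpa using this

end LeftOrder

namespace LeftOrder

variable {G : Type*} [Group G]

/-- Key step: given a proper inclusion of convex subgroups whose traces on `S` agree,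
the cone on `S` does not determine the order. -/
lemma gap_flip_contra (o : LeftOrder G) {S : Finset G} {K₁ K₂ : Subgroup G}
    (hK₁ : o.IsConvex K₁) (hK₂ : o.IsConvex K₂) (hle : K₂ ≤ K₁) (hne : K₂ ≠ K₁)
    (htr : ∀ s ∈ S, s ∈ K₁ → s ∈ K₂)
    (hS : ∀ o' : LeftOrder G, (∀ s ∈ S, o'.cone s = o.cone s) → o' = o) : False := by
  obtain ⟨g₀, hg₀K₁, hg₀K₂⟩ := SetLike.exists_of_lt (lt_of_le_of_ne hle hne)
  have hg₀ne : g₀ ≠ 1 := fun h => hg₀K₂ (h ▸ one_mem K₂)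
  set o₁ := o.flip K₁ hK₁ with ho₁
  have hK₂' : o₁.IsConvex K₂ := o.flip_isConvex hK₁ hK₂ hle
  set o₂ := o₁.flip K₂ hK₂' with ho₂
  -- cone of o₂ agrees with cone of o outside K₁ \ K₂
  have hcone : ∀ g : G, (g ∈ K₁ → g ∈ K₂) → (o₂.lt 1 g ↔ o.lt 1 g) := by
    intro g hg
    by_cases hgK₁ : g ∈ K₁
    · have hgK₂ := hg hgK₁
      rw [o₁.flip_pos_of_mem hK₂' hgK₂, o.flip_neg_of_mem hK₁ hgK₁]
    · have hgK₂ : g ∉ K₂ := fun hm => hgK₁ (hle hm)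
      rw [o₁.flip_pos_of_not_mem hK₂' hgK₂, o.flip_pos_of_not_mem hK₁ hgK₁]
  have heq : o₂ = o := by
    refine hS o₂ fun s hs => ?_
    have := hcone s (htr s hs)
    simp only [cone]
    exact decide_eq_decide.mpr this
  -- but the cone of o₂ at g₀ is flipped
  have hflip : o₂.lt 1 g₀ ↔ o.lt g₀ 1 := by
    rw [ho₂, o₁.flip_pos_of_not_mem hK₂' hg₀K₂, ho₁, o.flip_pos_of_mem hK₁ hg₀K₁]
  rw [heq] at hflip
  rcases o.total 1 g₀ with h | h | h
  · exact o.asymm h (hflip.mp h)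
  · exact hg₀ne h.symm
  · exact o.asymm h (hflip.mpr h)

end LeftOrder

/-- If a left-ordered group `(G, ⪯)` has infinitely many convex
subgroups, then `⪯` is not an isolated point of `LO(G)`. -/
theorem not_isolated_of_infinitely_many_convex_subgroups
    {G : Type*} [Group G] (o : LeftOrder G)
    (h : {H : Subgroup G | o.IsConvex H}.Infinite) :
    ¬ IsOpen ({o} : Set (LeftOrder G)) := by
  intro hop
  obtain ⟨S, hS⟩ := o.exists_finset_of_isOpen hop
  have hmaps : Set.MapsTo (fun H : Subgroup G => (↑S : Set G) ∩ ↑H)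
      {H | o.IsConvex H} {A | A ⊆ (↑S : Set G)} :=
    fun H _ => Set.inter_subset_left
  obtain ⟨K₁, hK₁, K₂, hK₂, hne, heq⟩ :=
    h.exists_ne_map_eq_of_mapsTo hmaps S.finite_toSet.finite_subsets
  have htr₁ : ∀ s ∈ S, s ∈ K₁ → s ∈ K₂ := by
    intro s hs hsK₁
    have : s ∈ (↑S : Set G) ∩ ↑K₁ := ⟨hs, hsK₁⟩
    rw [heq] at this
    exact this.2
  have htr₂ : ∀ s ∈ S, s ∈ K₂ → s ∈ K₁ := by
    intro s hs hsK₂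
    have : s ∈ (↑S : Set G) ∩ ↑K₂ := ⟨hs, hsK₂⟩
    rw [← heq] at this
    exact this.2
  rcases o.isConvex_chain hK₁ hK₂ with hle | hle
  · exact o.gap_flip_contra hK₂ hK₁ hle hne htr₂ hS
  · exact o.gap_flip_contra hK₁ hK₂ hle (Ne.symm hne) htr₁ hS
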